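/- Let q be a prime power, k < n ≤ m, and let α = (α_1,...,α_n) ∈ F_{q^m}^n have rank n over F_q. For 0 ≤ h ≤ k-1, suppose f(x) = ∑_{i=0}^{k-1} f_i x^{q^i} + η f_h x^{q^k} with f_h ≠ 0 (so f has q-degree k) satisfies N(f_0) ≠ (-1)^{mk} N(η) N(f_h), where N(x) = x^{(q^m-1)/(q-1)} is the norm from F_{q^m} to F_q. Then the kernel of f in F_{q^m} has F_q-dimension at most k-1; consequently the codeword (f(α_1),...,f(α_n)) has rank weight at least n-k+1. -/

import Mathlib

open Finset

lemma aux_prod_erase_zero (F : Type*) [Field F] [Fintype F] [DecidableEq F] :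
    ∏ x ∈ Finset.univ.erase (0:F), x = -1 := by
  have h1 : ((∏ x : Fˣ, x : Fˣ) : F) = ∏ x : Fˣ, (x : F) :=
    map_prod (Units.coeHom F) (fun x => x) Finset.univ
  rw [FiniteField.prod_univ_units_id_eq_neg_one] at h1
  have h2 : ∏ x : Fˣ, (x : F) = ∏ x ∈ Finset.univ.erase (0:F), x := by
    apply Finset.prod_bij (fun (u : Fˣ) _ => (u : F))
    · intro u _; exact Finset.mem_erase.2 ⟨u.ne_zero, Finset.mem_univ _⟩
    · intro a _ b _ hab; exact Units.ext hab
    · intro x hx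
      exact ⟨Units.mk0 x (Finset.mem_erase.1 hx).1, Finset.mem_univ _, rfl⟩
    · intro u _; rfl
  rw [← h2, ← h1]; rfl

lemma aux_geom (q : ℕ) (hq : 1 ≤ q) : ∀ k : ℕ, (q - 1) * ∑ i ∈ Finset.range k, q ^ i = q ^ k - 1 := by
  intro k
  induction k with
  | zero => simp
  | succ k ih =>
    rw [Finset.sum_range_succ, mul_add, ih, pow_succ]
    have h1 : 1 ≤ q ^ k := Nat.one_le_pow _ _ hq
    have h2 : (q - 1) * q ^ k = q ^ k * q - q ^ k := by
      rw [Nat.sub_mul, one_mul, Nat.mul_comm q (q ^ k)]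
    have h3 : q ^ k ≤ q ^ k * q := Nat.le_mul_of_pos_right _ hq
    omega

lemma aux_neg_one_pow {R : Type*} [Monoid R] [HasDistribNeg R] (a b : ℕ) (hab : a % 2 = b % 2) :
    (-1 : R) ^ a = (-1 : R) ^ b := by
  conv_lhs => rw [← Nat.div_add_mod a 2]
  conv_rhs => rw [← Nat.div_add_mod b 2]
  rw [pow_add, pow_add, pow_mul, pow_mul, neg_one_sq, one_pow, one_pow, hab]

lemma aux_orbit_prod {Fq K : Type*} [Field Fq] [Fintype Fq] [Field K] [Algebra Fq K]
    [DecidableEq Fq] [DecidableEq K] :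
    ∀ S : Finset K, (0:K) ∉ S →
      (∀ u ∈ S, ∀ c : Fq, c ≠ 0 → algebraMap Fq K c * u ∈ S) →
      ∃ (t : ℕ) (Q : K), S.card = t * (Fintype.card Fq - 1) ∧ Q ≠ 0 ∧
        ∏ u ∈ S, u = (-1) ^ t * Q ^ (Fintype.card Fq - 1) := by
  intro S
  induction S using Finset.strongInductionOn with
  | _ S ih =>
    intro h0 hcl
    rcases S.eq_empty_or_nonempty with rfl | ⟨u, hu⟩
    · exact ⟨0, 1, by simp⟩
    have hu0 : u ≠ 0 := fun h => h0 (h ▸ hu)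
    set O : Finset K := (Finset.univ.erase (0:Fq)).image (fun c => algebraMap Fq K c * u) with hO
    have hOS : O ⊆ S := by
      intro v hv
      rcases Finset.mem_image.1 hv with ⟨c, hc, rfl⟩
      exact hcl u hu c (Finset.mem_erase.1 hc).1
    have hinj : Set.InjOn (fun c : Fq => algebraMap Fq K c * u) (Finset.univ.erase (0:Fq)) := by
      intro a _ b _ hab
      exact (algebraMap Fq K).injective (mul_right_cancel₀ hu0 hab)
    have hcardO : O.card = Fintype.card Fq - 1 := by
      rw [hO, Finset.card_image_of_injOn hinj, Finset.card_erase_of_mem (Finset.mem_univ _),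
        Finset.card_univ]
    have hprodO : ∏ v ∈ O, v = -(u ^ (Fintype.card Fq - 1)) := by
      rw [hO, Finset.prod_image hinj]
      rw [Finset.prod_mul_distrib, Finset.prod_const, ← map_prod, aux_prod_erase_zero,
        Finset.card_erase_of_mem (Finset.mem_univ _), Finset.card_univ, map_neg, map_one]
      ring
    have huO : u ∈ O := by
      rw [hO]; apply Finset.mem_image.2
      exact ⟨1, Finset.mem_erase.2 ⟨one_ne_zero, Finset.mem_univ _⟩, by simp⟩
    have hss : S \ O ⊂ S := Finset.sdiff_ssubset hOS ⟨u, huO⟩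
    have h0' : (0:K) ∉ S \ O := fun h => h0 (Finset.mem_sdiff.1 h).1
    have hcl' : ∀ v ∈ S \ O, ∀ c : Fq, c ≠ 0 → algebraMap Fq K c * v ∈ S \ O := by
      intro v hv c hc
      rcases Finset.mem_sdiff.1 hv with ⟨hvS, hvO⟩
      refine Finset.mem_sdiff.2 ⟨hcl v hvS c hc, fun hmem => hvO ?_⟩
      rcases Finset.mem_image.1 hmem with ⟨d, hd, hdu⟩
      have hd0 : d ≠ 0 := (Finset.mem_erase.1 hd).1
      have : v = algebraMap Fq K (c⁻¹ * d) * u := by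
        rw [map_mul, mul_assoc, hdu, ← mul_assoc, ← map_mul, inv_mul_cancel₀ hc, map_one,
          one_mul]
      rw [hO]
      exact Finset.mem_image.2 ⟨c⁻¹ * d,
        Finset.mem_erase.2 ⟨mul_ne_zero (inv_ne_zero hc) hd0, Finset.mem_univ _⟩, this.symm⟩
    obtain ⟨t, Q, hcard, hQ, hprod⟩ := ih _ hss h0' hcl'
    refine ⟨t + 1, u * Q, ?_, mul_ne_zero hu0 hQ, ?_⟩
    · rw [← Finset.card_sdiff_add_card_eq_card hOS, hcard, hcardO]; ring
    · rw [← Finset.prod_sdiff hOS, hprod, hprodO, mul_pow]; ring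

lemma aux_part1 {Fq K : Type*} [Field Fq] [Fintype Fq] [Field K] [Fintype K]
    [Algebra Fq K] (q m k h : ℕ) (hq : Fintype.card Fq = q)
    (hK : Fintype.card K = q ^ m) (hm : 1 ≤ m) (hh : h < k)
    (η : K) (hη : η ≠ 0) (fc : ℕ → K) (hfh : fc h ≠ 0)
    (hN : fc 0 ^ ((q ^ m - 1) / (q - 1)) ≠
      (-1 : K) ^ (m * k) * η ^ ((q ^ m - 1) / (q - 1)) * fc h ^ ((q ^ m - 1) / (q - 1)))
    (U : Submodule Fq K)
    (hU : ∀ x ∈ U, (∑ i ∈ Finset.range k, fc i * x ^ q ^ i) + η * fc h * x ^ q ^ k = 0) :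
    Module.finrank Fq U ≤ k - 1 := by
  classical
  have hk : 1 ≤ k := by omega
  have q2 : 2 ≤ q := hq ▸ Fintype.one_lt_card
  -- characteristic facts
  set pchar := ringChar K with hpchar
  haveI : CharP K pchar := ringChar.charP K
  obtain ⟨⟨f, fpos⟩, hpp, hcard⟩ := FiniteField.card K pchar
  have hqdvd : q ∣ pchar ^ f := by
    have h1 : q ∣ q ^ m := dvd_pow_self q (by omega)
    rw [← hK, hcard] at h1
    exact h1
  obtain ⟨e, _, hqe⟩ := (Nat.dvd_prime_pow hpp).1 hqdvd
  -- the finset of U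
  set T : Finset K := Finset.univ.filter (fun x => x ∈ U) with hT
  have memT : ∀ x : K, x ∈ T ↔ x ∈ U := by
    intro x; simp [hT]
  have cardT : T.card = Fintype.card U := by
    rw [Fintype.card_subtype]
  -- the polynomial
  set P : Polynomial K := (∑ i ∈ Finset.range k, Polynomial.C (fc i) * Polynomial.X ^ q ^ i) +
      Polynomial.C (η * fc h) * Polynomial.X ^ q ^ k with hPdef
  have hcoeff : ∀ j, P.coeff j =
      (∑ i ∈ Finset.range k, if j = q ^ i then fc i else 0) +
        (if j = q ^ k then η * fc h else 0) := by
    intro j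
    simp only [hPdef, Polynomial.coeff_add, Polynomial.finset_sum_coeff, Polynomial.coeff_C_mul,
      Polynomial.coeff_X_pow, mul_ite, mul_one, mul_zero]
  have hqk : P.coeff (q ^ k) = η * fc h := by
    rw [hcoeff, Finset.sum_eq_zero, zero_add, if_pos rfl]
    intro i hi
    rw [if_neg (Nat.pow_lt_pow_right (by omega) (Finset.mem_range.1 hi)).ne']
  have h1coeff : P.coeff 1 = fc 0 := by
    rw [hcoeff]
    have hqk1 : q ≤ q ^ k := Nat.le_self_pow (by omega) q
    rw [if_neg (by omega : ¬ (1:ℕ) = q ^ k), add_zero, Finset.sum_eq_single 0]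
    · simp
    · intro i hi h0
      have : q ≤ q ^ i := Nat.le_self_pow h0 q
      rw [if_neg (by omega)]
    · intro habs; exact absurd (Finset.mem_range.2 (by omega)) habs
  have hP0 : P ≠ 0 := by
    intro hcon
    rw [hcon, Polynomial.coeff_zero] at hqk
    exact mul_ne_zero hη hfh hqk.symm
  have hdeg : P.natDegree ≤ q ^ k := by
    refine le_trans (Polynomial.natDegree_add_le _ _) (max_le ?_ ?_)
    · refine Polynomial.natDegree_sum_le_of_forall_le _ _ (fun i hi => ?_)
      refine le_trans (Polynomial.natDegree_C_mul_le _ _) ?_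
      rw [Polynomial.natDegree_X_pow]
      exact Nat.pow_le_pow_right (by omega) (le_of_lt (Finset.mem_range.1 hi))
    · exact le_trans (Polynomial.natDegree_C_mul_le _ _) (le_of_eq (Polynomial.natDegree_X_pow _))
  have hroot : ∀ u ∈ T, P.IsRoot u := by
    intro u hu
    have := hU u ((memT u).1 hu)
    simp only [Polynomial.IsRoot, hPdef, Polynomial.eval_add, Polynomial.eval_finset_sum,
      Polynomial.eval_mul, Polynomial.eval_C, Polynomial.eval_pow, Polynomial.eval_X]
    exact this
  have hle : T.val ≤ P.roots := by
    rw [Multiset.le_iff_count]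
    intro a
    by_cases ha : a ∈ T
    · rw [Polynomial.count_roots, Multiset.count_eq_one_of_mem T.nodup ha]
      exact (Polynomial.rootMultiplicity_pos hP0).2 (hroot a ha)
    · rw [Multiset.count_eq_zero_of_notMem (by simpa using ha)]
      exact Nat.zero_le _
  have hcard_le : T.card ≤ q ^ k :=
    le_trans (Multiset.card_le_card hle) (le_trans (Polynomial.card_roots' P) hdeg)
  have hrk : Module.finrank Fq U ≤ k := by
    have h1 := hcard_le
    rw [cardT, Module.card_eq_pow_finrank (K := Fq) (V := ↥U), hq] at h1
    exact (Nat.pow_le_pow_iff_right (by omega)).1 h1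
  by_contra hcon
  have hEq : Module.finrank Fq U = k := by omega
  have hTcard : T.card = q ^ k := by rw [cardT, Module.card_eq_pow_finrank (K := Fq) (V := ↥U), hq, hEq]
  -- factorization
  have h0T : (0:K) ∈ T := (memT 0).2 U.zero_mem
  have hdvd : (∏ u ∈ T, (Polynomial.X - Polynomial.C u)) ∣ P := by
    rw [Finset.prod_eq_multiset_prod]
    exact dvd_trans (Multiset.prod_dvd_prod_of_le (Multiset.map_le_map hle))
      (Polynomial.prod_multiset_X_sub_C_dvd P)
  obtain ⟨r, hr⟩ := hdvd
  have hmonic : (∏ u ∈ T, (Polynomial.X - Polynomial.C u)).Monic :=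
    Polynomial.monic_prod_of_monic _ _ (fun u _ => Polynomial.monic_X_sub_C u)
  have hdegprod : (∏ u ∈ T, (Polynomial.X - Polynomial.C u)).natDegree = q ^ k := by
    rw [Polynomial.natDegree_prod _ _ (fun u _ => Polynomial.X_sub_C_ne_zero u)]
    simp [Polynomial.natDegree_X_sub_C, hTcard]
  have hr0 : r ≠ 0 := by rintro rfl; rw [mul_zero] at hr; exact hP0 hr
  have hdegr : r.natDegree = 0 := by
    have h2 := Polynomial.natDegree_mul hmonic.ne_zero hr0
    rw [← hr, hdegprod] at h2
    omega
  have hrC : r = Polynomial.C (r.coeff 0) := Polynomial.eq_C_of_natDegree_eq_zero hdegr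
  rw [hrC] at hr
  have hcc : r.coeff 0 = η * fc h := by
    have h1 := congrArg (fun p => Polynomial.coeff p (q ^ k)) hr
    simp only [Polynomial.coeff_mul_C] at h1
    rw [hqk] at h1
    have h2 : (∏ u ∈ T, (Polynomial.X - Polynomial.C u)).coeff (q ^ k) = 1 := by
      rw [← hdegprod]; exact hmonic.coeff_natDegree
    rw [h2, one_mul] at h1
    exact h1.symm
  -- coefficient of X
  set S : Finset K := T.erase 0 with hSdef
  have hprodT : ∏ u ∈ T, (Polynomial.X - Polynomial.C u)
      = Polynomial.X * ∏ u ∈ S, (Polynomial.X - Polynomial.C u) := by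
    rw [← Finset.mul_prod_erase T _ h0T]
    simp
    rfl
  have hcoeff1prod : (∏ u ∈ T, (Polynomial.X - Polynomial.C u)).coeff 1
      = (-1) ^ S.card * ∏ u ∈ S, u := by
    rw [hprodT, Polynomial.coeff_X_mul, Polynomial.coeff_zero_eq_eval_zero, Polynomial.eval_prod]
    simp only [Polynomial.eval_sub, Polynomial.eval_X, Polynomial.eval_C, zero_sub]
    calc ∏ u ∈ S, -u = ∏ u ∈ S, (-1) * u := by simp
      _ = (∏ _u ∈ S, (-1:K)) * ∏ u ∈ S, u := Finset.prod_mul_distrib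
      _ = (-1) ^ S.card * ∏ u ∈ S, u := by rw [Finset.prod_const]
  have key : fc 0 = (η * fc h) * ((-1) ^ S.card * ∏ u ∈ S, u) := by
    have h1 := congrArg (fun p => Polynomial.coeff p 1) hr
    simp only [Polynomial.coeff_mul_C] at h1
    rw [h1coeff, hcoeff1prod, hcc] at h1
    rw [h1]; ring
  -- orbit structure of S
  have hS0 : (0:K) ∉ S := Finset.notMem_erase _ _
  have hScl : ∀ u ∈ S, ∀ c : Fq, c ≠ 0 → algebraMap Fq K c * u ∈ S := by
    intro u huS c hc
    have huU : u ∈ U := (memT u).1 (Finset.mem_of_mem_erase huS)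
    have hu0 : u ≠ 0 := Finset.ne_of_mem_erase huS
    have hac : algebraMap Fq K c ≠ 0 := by
      intro hz
      exact hc ((algebraMap Fq K).injective (by rw [hz, map_zero]))
    refine Finset.mem_erase.2 ⟨mul_ne_zero hac hu0, (memT _).2 ?_⟩
    rw [← Algebra.smul_def]
    exact U.smul_mem c huU
  obtain ⟨t, Q, hcardS, hQ, hprodS⟩ := aux_orbit_prod S hS0 hScl
  rw [hq] at hcardS hprodS
  have hcardS' : S.card = q ^ k - 1 := by rw [hSdef, Finset.card_erase_of_mem h0T, hTcard]
  have hgk := aux_geom q (by omega) k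
  have ht : t = ∑ i ∈ Finset.range k, q ^ i := by
    refine Nat.eq_of_mul_eq_mul_right (by omega : 0 < q - 1) ?_
    rw [← hcardS, hcardS', ← hgk, mul_comm]
  set s : ℕ := (q ^ m - 1) / (q - 1) with hs
  have hgm := aux_geom q (by omega) m
  have hsm : s = ∑ i ∈ Finset.range m, q ^ i := by
    rw [hs, ← hgm, mul_comm, Nat.mul_div_cancel _ (by omega : 0 < q - 1)]
  have hqm1 : (q - 1) * s = q ^ m - 1 := by rw [hsm]; exact hgm
  have hQ1 : Q ^ ((q - 1) * s) = 1 := by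
    rw [hqm1, ← hK]
    exact FiniteField.pow_card_sub_one_eq_one Q hQ
  have hsign : ((-1:K) ^ S.card) ^ s * ((-1:K) ^ t) ^ s = (-1:K) ^ (m * k) := by
    rw [← pow_mul, ← pow_mul, ← pow_add]
    by_cases hp2 : pchar = 2
    · haveI : CharP K 2 := by rw [← hp2]; infer_instance
      have h2 : ((2:ℕ):K) = 0 := CharP.cast_eq_zero K 2
      push_cast at h2
      have hneg : (-1:K) = 1 := by linear_combination -h2
      rw [hneg, one_pow, one_pow]
    · have hpodd : pchar % 2 = 1 := Nat.odd_iff.1 (hpp.odd_of_ne_two hp2)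
      have hqodd : q % 2 = 1 := by
        rw [hqe]
        rw [Nat.pow_mod, hpodd, Nat.one_pow]
      have hpowodd : ∀ j : ℕ, q ^ j % 2 = 1 := by
        intro j; rw [Nat.pow_mod, hqodd, Nat.one_pow]
      have h1 : S.card % 2 = 0 := by
        have := hpowodd k
        have h2 : 1 ≤ q ^ k := Nat.one_le_pow _ _ (by omega)
        rw [hcardS']; omega
      have hsum : ∀ j : ℕ, (∑ i ∈ Finset.range j, q ^ i) % 2 = j % 2 := by
        intro j
        rw [Finset.sum_nat_mod]
        have : ∀ i ∈ Finset.range j, q ^ i % 2 = 1 := fun i _ => hpowodd i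
        rw [Finset.sum_congr rfl this, Finset.sum_const, Finset.card_range, smul_eq_mul,
          mul_one]
      have h2 : t % 2 = k % 2 := by rw [ht]; exact hsum k
      have h3 : s % 2 = m % 2 := by rw [hsm]; exact hsum m
      apply aux_neg_one_pow
      rw [Nat.add_mod, Nat.mul_mod (#S) s, Nat.mul_mod t s, Nat.mul_mod m k, h1, h2, h3]
      rcases Nat.mod_two_eq_zero_or_one k with hk2 | hk2 <;>
        rcases Nat.mod_two_eq_zero_or_one m with hm2 | hm2 <;> simp [hk2, hm2]
  have hfinal : fc 0 ^ s = (-1:K) ^ (m * k) * η ^ s * fc h ^ s := by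
    have expand : ((η * fc h) * ((-1:K) ^ S.card * ((-1:K) ^ t * Q ^ (q - 1)))) ^ s
        = (((-1:K) ^ S.card) ^ s * ((-1:K) ^ t) ^ s) * (η ^ s * fc h ^ s) * Q ^ ((q - 1) * s) := by
      rw [pow_mul]; ring
    rw [key, hprodS, expand, hQ1, mul_one, hsign]; ring
  exact hN hfinal

/-- for `f(x) = ∑_{i<k} f_i x^{q^i} + η f_h x^{q^k}` with `f_h ≠ 0`, if
`N(f_0) ≠ (-1)^{mk} N(η) N(f_h)` (norm from `F_{q^m}` to `F_q`), then every `F_q`-subspace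
of `K` contained in the kernel of `f` has dimension at most `k-1`; consequently the
codeword `(f(α_1),…,f(α_n))` has rank weight at least `n-k+1`. -/
theorem norm_condition_MRD {Fq K : Type*} [Field Fq] [Fintype Fq] [Field K] [Fintype K]
    [Algebra Fq K] (q m n k h : ℕ) (hq : Fintype.card Fq = q)
    (hK : Fintype.card K = q ^ m) (hkn : k < n) (hnm : n ≤ m) (hh : h < k)
    (α : ℕ → K) (hα : LinearIndependent Fq (fun i : Fin n => α (i:ℕ)))
    (η : K) (hη : η ≠ 0) (fc : ℕ → K) (hfh : fc h ≠ 0)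
    (hN : fc 0 ^ ((q ^ m - 1) / (q - 1)) ≠
      (-1 : K) ^ (m * k) * η ^ ((q ^ m - 1) / (q - 1)) * fc h ^ ((q ^ m - 1) / (q - 1))) :
    (∀ U : Submodule Fq K,
        (∀ x ∈ U, (∑ i ∈ Finset.range k, fc i * x ^ q ^ i) + η * fc h * x ^ q ^ k = 0) →
        Module.finrank Fq U ≤ k - 1) ∧
    n - k + 1 ≤ Module.finrank Fq (Submodule.span Fq (Set.range (fun j : Fin n =>
      (∑ i ∈ Finset.range k, fc i * α (j:ℕ) ^ q ^ i) + η * fc h * α (j:ℕ) ^ q ^ k))) := by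
  classical
  have hm : 1 ≤ m := by omega
  refine ⟨fun U hU => aux_part1 q m k h hq hK hm hh η hη fc hfh hN U hU, ?_⟩
  -- characteristic facts
  set pchar := ringChar K with hpchar
  haveI : CharP K pchar := ringChar.charP K
  obtain ⟨⟨f, fpos⟩, hpp, hcard⟩ := FiniteField.card K pchar
  haveI := Fact.mk hpp
  have q2 : 2 ≤ q := hq ▸ Fintype.one_lt_card
  have hqdvd : q ∣ pchar ^ f := by
    have h1 : q ∣ q ^ m := dvd_pow_self q (by omega)
    rw [← hK, hcard] at h1
    exact h1
  obtain ⟨e, _, hqe⟩ := (Nat.dvd_prime_pow hpp).1 hqdvd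
  have hfrob : ∀ (i : ℕ) (x y : K), (x + y) ^ q ^ i = x ^ q ^ i + y ^ q ^ i := by
    intro i x y
    rw [hqe, ← pow_mul]
    exact add_pow_char_pow x y pchar (e * i)
  have hsmul : ∀ (i : ℕ) (c : Fq) (x : K), (c • x) ^ q ^ i = c • x ^ q ^ i := by
    intro i c x
    rw [Algebra.smul_def, Algebra.smul_def, mul_pow, ← map_pow]
    congr 2
    conv_lhs => rw [← hq]
    exact FiniteField.pow_card_pow i c
  set L : K →ₗ[Fq] K := {
    toFun := fun x => (∑ i ∈ Finset.range k, fc i * x ^ q ^ i) + η * fc h * x ^ q ^ k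
    map_add' := by
      intro x y
      simp only [hfrob, mul_add, Finset.sum_add_distrib]
      ring
    map_smul' := by
      intro c x
      simp only [hsmul]
      simp only [RingHom.id_apply, Algebra.smul_def, mul_add, Finset.mul_sum]
      congr 1
      · exact Finset.sum_congr rfl fun i _ => by ring
      · ring } with hL
  set W := Submodule.span Fq (Set.range (fun j : Fin n => α (j:ℕ))) with hW
  have hrange : (Set.range fun j : Fin n =>
      (∑ i ∈ Finset.range k, fc i * α (j:ℕ) ^ q ^ i) + η * fc h * α (j:ℕ) ^ q ^ k)
      = L '' (Set.range fun j : Fin n => α (j:ℕ)) := by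
    rw [← Set.range_comp]; rfl
  rw [hrange, ← Submodule.map_span, ← hW]
  have hWrank : Module.finrank Fq W = n := by
    rw [hW, finrank_span_eq_card hα, Fintype.card_fin]
  have hrn := LinearMap.finrank_range_add_finrank_ker (L.domRestrict W)
  rw [LinearMap.range_domRestrict, hWrank] at hrn
  have hker : Module.finrank Fq (LinearMap.ker (L.domRestrict W)) ≤ k - 1 := by
    have heq : LinearMap.ker (L.domRestrict W)
        = Submodule.comap W.subtype (LinearMap.ker L ⊓ W) := by
      rw [LinearMap.ker_domRestrict, Submodule.comap_inf, Submodule.comap_subtype_self,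
        inf_top_eq]
    rw [heq, LinearEquiv.finrank_eq (Submodule.comapSubtypeEquivOfLe inf_le_right)]
    apply aux_part1 q m k h hq hK hm hh η hη fc hfh hN
    intro x hx
    have h1 : L x = 0 := LinearMap.mem_ker.mp hx.1
    simpa only [hL, LinearMap.coe_mk, AddHom.coe_mk] using h1
  omega
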